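/- Let S = (C × C)/G be a surface isogenous to a product of mixed type with p_g = 0 given by the first family in the classification (G = G(64,92), G⁰ = G(32,46), g(C) = 9). Let D₁, D₂, D₃, D₄ be four distinct irreducible effective orbit divisors on S satisfying D_i² = 0 for all i, D₁·D₄ = D₂·D₃ = 0, and D₁·D₂ = D₁·D₃ = D₂·D₄ = D₃·D₄ = 4. Then Eff(S) = Nef(S) = SAmp(S) = ℝ≥0⟨D₁, D₂⟩, and in particular S is a Mori dream surface with no negative curves. -/
import Mathlib


/-- Let `S = (C × C)/G` be the mixed surface isogenous to a product with
`p_g = 0` of the first family (`G = G(64,92)`, `G⁰ = G(32,46)`, `g(C) = 9`): a fake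
quadric with `ρ(S) = 2`. We model `N¹(S)` as a 2-dimensional real vector space `V`
with symmetric intersection form `B`, the set `EffDiv` of irreducible effective
divisors with class map `cls`, and the cones `Eff`, `Nef`, `SAmp` in `V`, where:
`SAmp` is a convex cone contained in `Nef`; `Nef` is the dual of `Eff` and `Eff` is
the dual of `Nef`; classes of effective divisors lie in `Eff`; and two distinct
irreducible effective numerically equivalent divisors with intersection number `0`
(hence disjoint) are semiample. Given four distinct irreducible effective orbit
divisors `D₁, D₂, D₃, D₄` with `Dᵢ² = 0`, `D₁·D₄ = D₂·D₃ = 0` and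
`D₁·D₂ = D₁·D₃ = D₂·D₄ = D₃·D₄ = 4`, then
`Eff(S) = Nef(S) = SAmp(S) = ℝ≥0⟨D₁, D₂⟩`, and `S` has no negative curve. -/
theorem stmt_11 (V : Type*) [AddCommGroup V] [Module ℝ V]
    (hdim : Module.finrank ℝ V = 2)
    (B : V →ₗ[ℝ] V →ₗ[ℝ] ℝ) (hsymm : ∀ x y : V, B x y = B y x)
    (Div : Type*) (cls : Div → V) (EffDiv : Set Div)
    (Eff Nef SAmp : Set V)
    (hSadd : ∀ x ∈ SAmp, ∀ y ∈ SAmp, x + y ∈ SAmp)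
    (hSsmul : ∀ x ∈ SAmp, ∀ c : ℝ, 0 ≤ c → c • x ∈ SAmp)
    (hSN : SAmp ⊆ Nef)
    (hNefdual : Nef = {x : V | ∀ y ∈ Eff, 0 ≤ B x y})
    (hEffdual : Eff = {x : V | ∀ y ∈ Nef, 0 ≤ B x y})
    (hcls : ∀ A ∈ EffDiv, cls A ∈ Eff)
    (hsa : ∀ A ∈ EffDiv, ∀ A' ∈ EffDiv, A ≠ A' → cls A = cls A' →
      B (cls A) (cls A') = 0 → cls A ∈ SAmp)
    (D1 D2 D3 D4 : Div)
    (hD1 : D1 ∈ EffDiv) (hD2 : D2 ∈ EffDiv) (hD3 : D3 ∈ EffDiv) (hD4 : D4 ∈ EffDiv)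
    (hne12 : D1 ≠ D2) (hne13 : D1 ≠ D3) (hne14 : D1 ≠ D4)
    (hne23 : D2 ≠ D3) (hne24 : D2 ≠ D4) (hne34 : D3 ≠ D4)
    (h11 : B (cls D1) (cls D1) = 0) (h22 : B (cls D2) (cls D2) = 0)
    (h33 : B (cls D3) (cls D3) = 0) (h44 : B (cls D4) (cls D4) = 0)
    (h14 : B (cls D1) (cls D4) = 0) (h23 : B (cls D2) (cls D3) = 0)
    (h12 : B (cls D1) (cls D2) = 4) (h13 : B (cls D1) (cls D3) = 4)
    (h24 : B (cls D2) (cls D4) = 4) (h34 : B (cls D3) (cls D4) = 4) :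
    Eff = Nef ∧ Nef = SAmp ∧
      SAmp = {x : V | ∃ a b : ℝ, 0 ≤ a ∧ 0 ≤ b ∧ x = a • cls D1 + b • cls D2} ∧
      ∀ A ∈ EffDiv, 0 ≤ B (cls A) (cls A) := by

  have hli : LinearIndependent ℝ ![cls D1, cls D2] := by
    rw [LinearIndependent.pair_iff]
    intro s t hst
    have h1 := congrArg (fun v => B v (cls D2)) hst
    have h2 := congrArg (fun v => B v (cls D1)) hst
    simp only [map_add, map_smul, LinearMap.add_apply, LinearMap.smul_apply,
      smul_eq_mul, map_zero, LinearMap.zero_apply, h11, h22, h12,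
      hsymm (cls D2) (cls D1)] at h1 h2
    constructor <;> linarith
  have hcard : Fintype.card (Fin 2) = Module.finrank ℝ V := by simp [hdim]
  let bb := basisOfLinearIndependentOfCardEqFinrank hli hcard
  have hbb : ∀ i, bb i = ![cls D1, cls D2] i := fun i => by
    simp [bb, coe_basisOfLinearIndependentOfCardEqFinrank]
  have hrep : ∀ x : V, ∃ a b : ℝ, x = a • cls D1 + b • cls D2 := by
    intro x
    refine ⟨bb.repr x 0, bb.repr x 1, ?_⟩
    have := bb.sum_repr x
    rw [Fin.sum_univ_two, hbb 0, hbb 1] at this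
    simpa using this.symm
  have key : ∀ a b : ℝ, B (a • cls D1 + b • cls D2) (cls D1) = 4 * b ∧
      B (a • cls D1 + b • cls D2) (cls D2) = 4 * a := by
    intro a b
    constructor <;>
    · simp only [map_add, map_smul, LinearMap.add_apply, LinearMap.smul_apply,
        smul_eq_mul, h11, h22, h12, hsymm (cls D2) (cls D1)]
      ring
  -- cls D3 = cls D2
  obtain ⟨a3, b3, he3⟩ := hrep (cls D3)
  have h13' : B (cls D3) (cls D1) = 4 := by rw [hsymm]; exact h13
  have h23' : B (cls D3) (cls D2) = 0 := by rw [hsymm]; exact h23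
  rw [he3, (key a3 b3).1] at h13'
  rw [he3, (key a3 b3).2] at h23'
  have ha3 : a3 = 0 := by linarith
  have hb3 : b3 = 1 := by linarith
  have hD3eq : cls D3 = cls D2 := by rw [he3, ha3, hb3]; simp
  -- cls D4 = cls D1
  obtain ⟨a4, b4, he4⟩ := hrep (cls D4)
  have h14' : B (cls D4) (cls D1) = 0 := by rw [hsymm]; exact h14
  have h24' : B (cls D4) (cls D2) = 4 := by rw [hsymm]; exact h24
  rw [he4, (key a4 b4).1] at h14'
  rw [he4, (key a4 b4).2] at h24'
  have hD4eq : cls D4 = cls D1 := by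
    rw [he4, (by linarith : a4 = 1), (by linarith : b4 = 0)]; simp
  -- cls D1, cls D2 are semiample
  have hs1 : cls D1 ∈ SAmp :=
    hsa D1 hD1 D4 hD4 hne14 hD4eq.symm (by rw [h14])
  have hs2 : cls D2 ∈ SAmp :=
    hsa D2 hD2 D3 hD3 hne23 hD3eq.symm (by rw [h23])
  set C : Set V := {x : V | ∃ a b : ℝ, 0 ≤ a ∧ 0 ≤ b ∧ x = a • cls D1 + b • cls D2}
    with hC
  have hCS : C ⊆ SAmp := by
    rintro x ⟨a, b, ha, hb, rfl⟩
    exact hSadd _ (hSsmul _ hs1 a ha) _ (hSsmul _ hs2 b hb)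
  have hNC : Nef ⊆ C := by
    intro x hx
    rw [hNefdual] at hx
    obtain ⟨a, b, rfl⟩ := hrep x
    have h1 : 0 ≤ 4 * b := (key a b).1 ▸ hx (cls D1) (hcls D1 hD1)
    have h2 : 0 ≤ 4 * a := (key a b).2 ▸ hx (cls D2) (hcls D2 hD2)
    exact ⟨a, b, by linarith, by linarith, rfl⟩
  have hNS : Nef = SAmp := Set.Subset.antisymm (fun x hx => hCS (hNC hx)) hSN
  have hNCeq : Nef = C := Set.Subset.antisymm hNC (fun x hx => hSN (hCS hx))
  have hBC : ∀ x ∈ C, ∀ y ∈ C, 0 ≤ B x y := by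
    rintro x ⟨a, b, ha, hb, rfl⟩ y ⟨c, d, hc, hd, rfl⟩
    have : B (a • cls D1 + b • cls D2) (c • cls D1 + d • cls D2)
        = 4 * (a * d + b * c) := by
      simp only [map_add, map_smul, LinearMap.add_apply, LinearMap.smul_apply,
        smul_eq_mul, h11, h22, h12, hsymm (cls D2) (cls D1)]
      ring
    rw [this]; positivity
  have hEC : Eff = C := by
    apply Set.Subset.antisymm
    · intro x hx
      rw [hEffdual] at hx
      obtain ⟨a, b, rfl⟩ := hrep x
      have h1 : 0 ≤ 4 * b := (key a b).1 ▸ hx (cls D1) (hSN hs1)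
      have h2 : 0 ≤ 4 * a := (key a b).2 ▸ hx (cls D2) (hSN hs2)
      exact ⟨a, b, by linarith, by linarith, rfl⟩
    · intro x hx
      rw [hEffdual]
      intro y hy
      exact hBC x hx y (hNCeq ▸ hy)
  refine ⟨hEC.trans hNCeq.symm, hNS, hNS.symm.trans hNCeq, ?_⟩
  intro A hA
  have hAC : cls A ∈ C := hEC ▸ hcls A hA
  exact hBC _ hAC _ hAC
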